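/- arXiv:math/0312470 — 2 statements merged into one kernel-verified Lean document; each statement's English description precedes it below -/
import Mathlib

section
/- Let $n > 3$ and let $\Delta$ be the simplicial complex on $V = \{1,\ldots,n\}$ spanned by the sets $\{a,b,a+b\}$ with $1 \leq a < b$ and $a+b \leq n$, together with the sets $\{a,b,c\}$ with $1 \leq a < b < c \leq n$ and $a+b+c = 2n+1$. Then the number of facets of $\Delta$ equals $\frac{n(n-2)}{3}$ when $3 \nmid n$ (e.g., when $2n+1$ is prime). -/
open Finset

def Sset (n : ℕ) : Finset ((_ : ℕ) × ℕ) :=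
  (Finset.Icc 1 n).sigma (fun b => Finset.Icc 1 (min (b - 1) (2 * n - 2 * b)))

lemma mem_Sset {n b a : ℕ} :
    (⟨b, a⟩ : (_ : ℕ) × ℕ) ∈ Sset n ↔ 1 ≤ a ∧ a < b ∧ a + 2 * b ≤ 2 * n := by
  simp only [Sset, Finset.mem_sigma, Finset.mem_Icc]
  omega

def facetOf (n : ℕ) (p : (_ : ℕ) × ℕ) : Finset ℕ :=
  if p.2 + p.1 ≤ n then {p.2, p.1, p.2 + p.1} else {p.2, p.1, 2 * n + 1 - p.2 - p.1}

lemma facetOf_mk (n b a : ℕ) :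
    facetOf n ⟨b, a⟩ =
      if a + b ≤ n then ({a, b, a + b} : Finset ℕ) else {a, b, 2 * n + 1 - a - b} := rfl

lemma sorted3 (s : Finset ℕ) (h : s.card = 3) :
    ∃ a b c : ℕ, a < b ∧ b < c ∧ s = {a, b, c} := by
  rw [Finset.card_eq_three] at h
  obtain ⟨x, y, z, hxy, hxz, hyz, rfl⟩ := h
  rcases lt_trichotomy x y with h1 | h1 | h1 <;>
  rcases lt_trichotomy y z with h2 | h2 | h2 <;>
  rcases lt_trichotomy x z with h3 | h3 | h3 <;>
  first
  | omega
  | (exact ⟨x, y, z, by omega, by omega,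
      by ext t; simp only [Finset.mem_insert, Finset.mem_singleton]; try omega⟩)
  | (exact ⟨x, z, y, by omega, by omega,
      by ext t; simp only [Finset.mem_insert, Finset.mem_singleton]; try omega⟩)
  | (exact ⟨y, x, z, by omega, by omega,
      by ext t; simp only [Finset.mem_insert, Finset.mem_singleton]; try omega⟩)
  | (exact ⟨y, z, x, by omega, by omega,
      by ext t; simp only [Finset.mem_insert, Finset.mem_singleton]; try omega⟩)
  | (exact ⟨z, x, y, by omega, by omega,
      by ext t; simp only [Finset.mem_insert, Finset.mem_singleton]; try omega⟩)
  | (exact ⟨z, y, x, by omega, by omega,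
      by ext t; simp only [Finset.mem_insert, Finset.mem_singleton]; try omega⟩)

lemma sumA : ∀ m : ℕ, 2 * (∑ b ∈ Finset.Ioc 0 m, (b - 1)) + m = m * m := by
  intro m
  induction m with
  | zero => simp
  | succ k ih =>
    rw [Finset.sum_Ioc_succ_top (Nat.zero_le k)]
    have hs : k + 1 - 1 = k := by omega
    rw [hs, show (k + 1) * (k + 1) = k * k + 2 * k + 1 from by ring]
    linarith

lemma sumB : ∀ d m : ℕ, (∑ b ∈ Finset.Ioc m (m + d), (2 * (m + d) - 2 * b)) + d = d * d := by
  intro d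
  induction d with
  | zero => intro m; simp
  | succ k ih =>
    intro m
    have h1 : m + (k + 1) = (m + 1) + k := by omega
    rw [h1, ← Finset.sum_Ioc_consecutive _ (Nat.le_succ m) (by omega : m + 1 ≤ (m + 1) + k)]
    rw [Nat.Ioc_succ_singleton, Finset.sum_singleton]
    have h2 : 2 * ((m + 1) + k) - 2 * (m + 1) = 2 * k := by omega
    rw [h2, show (k + 1) * (k + 1) = k * k + 2 * k + 1 from by ring]
    have := ih (m + 1)
    linarith

lemma card_Sset (n : ℕ) (h3 : n % 3 ≠ 1) : 3 * (Sset n).card + 2 * n = n * n := by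
  have hcard : (Sset n).card = ∑ b ∈ Finset.Ioc 0 n, min (b - 1) (2 * n - 2 * b) := by
    rw [Sset, Finset.card_sigma, ← Finset.Icc_add_one_left_eq_Ioc]
    refine Finset.sum_congr rfl (fun b _ => ?_)
    rw [Nat.card_Icc]
    omega
  obtain ⟨k, hk⟩ : ∃ k, n = 3 * k ∨ n = 3 * k + 2 := ⟨n / 3, by omega⟩
  rcases hk with rfl | rfl
  · -- n = 3k, split at 2k
    have hsplit := Finset.sum_Ioc_consecutive
      (fun b => min (b - 1) (2 * (3 * k) - 2 * b)) (by omega : 0 ≤ 2 * k)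
      (by omega : 2 * k ≤ 3 * k)
    have e1 : ∑ b ∈ Finset.Ioc 0 (2 * k), min (b - 1) (2 * (3 * k) - 2 * b)
        = ∑ b ∈ Finset.Ioc 0 (2 * k), (b - 1) := by
      refine Finset.sum_congr rfl (fun b hb => ?_)
      rw [Finset.mem_Ioc] at hb
      omega
    have e2 : ∑ b ∈ Finset.Ioc (2 * k) (3 * k), min (b - 1) (2 * (3 * k) - 2 * b)
        = ∑ b ∈ Finset.Ioc (2 * k) ((2 * k) + k), (2 * ((2 * k) + k) - 2 * b) := by
      rw [show (2 * k) + k = 3 * k by ring]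
      refine Finset.sum_congr rfl (fun b hb => ?_)
      rw [Finset.mem_Ioc] at hb
      omega
    have hA := sumA (2 * k)
    have hB := sumB k (2 * k)
    rw [hcard, ← hsplit, e1, e2,
      show (3 * k) * (3 * k) = 9 * (k * k) from by ring]
    rw [show (2 * k) * (2 * k) = 4 * (k * k) from by ring] at hA
    linarith
  · -- n = 3k+2, split at 2k+1
    have hsplit := Finset.sum_Ioc_consecutive
      (fun b => min (b - 1) (2 * (3 * k + 2) - 2 * b)) (by omega : 0 ≤ 2 * k + 1)
      (by omega : 2 * k + 1 ≤ 3 * k + 2)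
    have e1 : ∑ b ∈ Finset.Ioc 0 (2 * k + 1), min (b - 1) (2 * (3 * k + 2) - 2 * b)
        = ∑ b ∈ Finset.Ioc 0 (2 * k + 1), (b - 1) := by
      refine Finset.sum_congr rfl (fun b hb => ?_)
      rw [Finset.mem_Ioc] at hb
      omega
    have e2 : ∑ b ∈ Finset.Ioc (2 * k + 1) (3 * k + 2), min (b - 1) (2 * (3 * k + 2) - 2 * b)
        = ∑ b ∈ Finset.Ioc (2 * k + 1) ((2 * k + 1) + (k + 1)), (2 * ((2 * k + 1) + (k + 1)) - 2 * b) := by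
      rw [show (2 * k + 1) + (k + 1) = 3 * k + 2 by ring]
      refine Finset.sum_congr rfl (fun b hb => ?_)
      rw [Finset.mem_Ioc] at hb
      omega
    have hA := sumA (2 * k + 1)
    have hB := sumB (k + 1) (2 * k + 1)
    rw [hcard, ← hsplit, e1, e2,
      show (3 * k + 2) * (3 * k + 2) = 9 * (k * k) + 12 * k + 4 from by ring]
    rw [show (2 * k + 1) * (2 * k + 1) = 4 * (k * k) + 4 * k + 1 from by ring] at hA
    rw [show (k + 1) * (k + 1) = (k * k) + 2 * k + 1 from by ring] at hB
    linarith

open scoped Classical in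
lemma bij_card (n : ℕ) :
    ((((Finset.Icc 1 n).powersetCard 3).filter (fun F =>
        (∃ a b : ℕ, 1 ≤ a ∧ a < b ∧ a + b ≤ n ∧ F = {a, b, a + b}) ∨
        (∑ x ∈ F, x) = 2 * n + 1)).card) = (Sset n).card := by
  refine (Finset.card_bij (fun p _ => facetOf n p) ?_ ?_ ?_).symm
  · -- maps into
    rintro ⟨b, a⟩ hp
    rw [mem_Sset] at hp
    obtain ⟨ha1, hab, h2n⟩ := hp
    simp only [facetOf_mk]
    rw [Finset.mem_filter]
    by_cases hcase : a + b ≤ n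
    · rw [if_pos hcase]
      refine ⟨Finset.mem_powersetCard.mpr ⟨?_, ?_⟩, Or.inl ⟨a, b, ha1, hab, hcase, rfl⟩⟩
      · intro x hx
        simp only [Finset.mem_insert, Finset.mem_singleton] at hx
        rw [Finset.mem_Icc]; omega
      · rw [Finset.card_insert_of_notMem (by simp; omega),
          Finset.card_insert_of_notMem (by simp; omega), Finset.card_singleton]
    · rw [if_neg hcase]
      refine ⟨Finset.mem_powersetCard.mpr ⟨?_, ?_⟩, Or.inr ?_⟩
      · intro x hx
        simp only [Finset.mem_insert, Finset.mem_singleton] at hx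
        rw [Finset.mem_Icc]; omega
      · rw [Finset.card_insert_of_notMem (by simp; omega),
          Finset.card_insert_of_notMem (by simp; omega), Finset.card_singleton]
      · rw [Finset.sum_insert (by simp; omega), Finset.sum_insert (by simp; omega),
          Finset.sum_singleton]
        omega
  · -- injectivity
    rintro ⟨b1, a1⟩ h1 ⟨b2, a2⟩ h2 heq
    rw [mem_Sset] at h1 h2
    simp only [facetOf_mk] at heq
    obtain ⟨d1, hd1e, hd1⟩ : ∃ d, 2 * n + 1 - a1 - b1 = d ∧ a1 + b1 + d = 2 * n + 1 :=
      ⟨2 * n + 1 - a1 - b1, rfl, by omega⟩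
    obtain ⟨d2, hd2e, hd2⟩ : ∃ d, 2 * n + 1 - a2 - b2 = d ∧ a2 + b2 + d = 2 * n + 1 :=
      ⟨2 * n + 1 - a2 - b2, rfl, by omega⟩
    rw [hd1e, hd2e] at heq
    have key : b1 = b2 ∧ a1 = a2 := by
      split_ifs at heq with c1 c2 c2 <;>
      · have E1 := Finset.ext_iff.mp heq a1
        have E2 := Finset.ext_iff.mp heq b1
        have E3 := Finset.ext_iff.mp heq (a1 + b1)
        have E4 := Finset.ext_iff.mp heq d1
        have E5 := Finset.ext_iff.mp heq a2
        have E6 := Finset.ext_iff.mp heq b2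
        have E7 := Finset.ext_iff.mp heq (a2 + b2)
        have E8 := Finset.ext_iff.mp heq d2
        simp only [Finset.mem_insert, Finset.mem_singleton, eq_self_iff_true, true_or,
          or_true, true_iff, iff_true] at E1 E2 E3 E4 E5 E6 E7 E8
        omega
    obtain ⟨hb, ha⟩ := key
    subst hb; subst ha; rfl
  · -- surjectivity
    intro F hF
    rw [Finset.mem_filter, Finset.mem_powersetCard] at hF
    obtain ⟨⟨hsub, hcard3⟩, hpred⟩ := hF
    rcases hpred with ⟨a, b, ha1, hab, hn', rfl⟩ | hsum
    · have hb : b ≤ n := by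
        have := hab; omega
      refine ⟨⟨b, a⟩, mem_Sset.mpr ⟨ha1, hab, by omega⟩, ?_⟩
      simp only [facetOf_mk]
      rw [if_pos hn']
    · obtain ⟨x, y, z, hxy, hyz, rfl⟩ := sorted3 _ hcard3
      have hx := hsub (by simp : x ∈ ({x, y, z} : Finset ℕ))
      have hy := hsub (by simp : y ∈ ({x, y, z} : Finset ℕ))
      have hz := hsub (by simp : z ∈ ({x, y, z} : Finset ℕ))
      rw [Finset.mem_Icc] at hx hy hz
      rw [Finset.sum_insert (by simp; omega), Finset.sum_insert (by simp; omega),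
        Finset.sum_singleton] at hsum
      refine ⟨⟨y, x⟩, mem_Sset.mpr ⟨by omega, hxy, by omega⟩, ?_⟩
      simp only [facetOf_mk]
      rw [if_neg (by omega : ¬ x + y ≤ n)]
      have hce : 2 * n + 1 - x - y = z := by omega
      rw [hce]

open scoped Classical in
/-- for `n > 3` with `n ≡ 0` or `2 (mod 3)`, the number of facets of
the complex spanned by the triples `{a,b,a+b}` (`1 ≤ a < b`, `a+b ≤ n`) together with
the triples `{a,b,c} ⊆ [n]` with `a+b+c = 2n+1` equals `n(n-2)/3`. -/
theorem stmt_13 (n : ℕ) (hn : 3 < n) (h3 : n % 3 ≠ 1) :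
    ((((Finset.Icc 1 n).powersetCard 3).filter (fun F =>
        (∃ a b : ℕ, 1 ≤ a ∧ a < b ∧ a + b ≤ n ∧ F = {a, b, a + b}) ∨
        (∑ x ∈ F, x) = 2 * n + 1)).card) = n * (n - 2) / 3 := by
  rw [bij_card n]
  have h := card_Sset n h3
  have h2 : n * (n - 2) + n * 2 = n * n := by
    rw [← Nat.mul_add]
    congr 1
    omega
  generalize hA : n * n = A at h h2
  generalize hB : n * (n - 2) = B at h2 ⊢
  omega
end

section
/- Let $n \geq 5$ with $n = 3k$, and let $\Delta$ be the simplicial complex on $V = \{0,1,\ldots,n-1\}$ spanned by the triples $\{\overline{i}, \overline{i+k}, \overline{i+2k}\}$ for $0 \leq i \leq k-1$ together with $\{\overline{i}, \overline{i+k}, \overline{i+j}\}$ for $0 \leq i \leq 3k-1$ and $k+1 \leq j \leq 2k-1$ (indices mod $n$). Then the number of facets of $\Delta$ equals $\frac{n(n-2)}{3} = k(3k-2)$. -/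
private lemma cinj17 {k : ℕ} (hk : 2 ≤ k) {a b : ℕ} (ha : a < 3*k) (hb : b < 3*k)
    (h : ((a : ℕ) : ZMod (3*k)) = ((b : ℕ) : ZMod (3*k))) : a = b := by
  haveI : NeZero (3*k) := ⟨by omega⟩
  have := congrArg ZMod.val h
  rwa [ZMod.val_natCast_of_lt ha, ZMod.val_natCast_of_lt hb] at this

private lemma three17 {k : ℕ} :
    ((k : ℕ) : ZMod (3*k)) + ((k : ℕ) : ZMod (3*k)) + ((k : ℕ) : ZMod (3*k)) = 0 := by
  have h : ((3*k : ℕ) : ZMod (3*k)) = 0 := ZMod.natCast_self _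
  push_cast at h
  linear_combination h

/-- for `n = 3k ≥ 5`, the complex on `ZMod (3k)` spanned by the
triples `{i, i+k, i+2k}` (`0 ≤ i ≤ k-1`) and `{i, i+k, i+j}`
(`0 ≤ i ≤ 3k-1`, `k+1 ≤ j ≤ 2k-1`) has exactly `n(n-2)/3 = k(3k-2)` facets. -/
theorem stmt_17 (k : ℕ) (hk : 5 ≤ 3 * k) :
    (((Finset.range k).image (fun i =>
        ({((i : ℕ) : ZMod (3 * k)), ((i + k : ℕ) : ZMod (3 * k)),
          ((i + 2 * k : ℕ) : ZMod (3 * k))} : Finset (ZMod (3 * k)))))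
      ∪ (((Finset.range (3 * k)) ×ˢ (Finset.Icc (k + 1) (2 * k - 1))).image
          (fun p =>
            ({((p.1 : ℕ) : ZMod (3 * k)), ((p.1 + k : ℕ) : ZMod (3 * k)),
              ((p.1 + p.2 : ℕ) : ZMod (3 * k))} : Finset (ZMod (3 * k)))))).card
      = k * (3 * k - 2) := by
  have hk2 : 2 ≤ k := by omega
  have h3 := three17 (k := k)
  -- injectivity of the first map
  have hinj1 : Set.InjOn (fun i =>
      ({((i : ℕ) : ZMod (3 * k)), ((i + k : ℕ) : ZMod (3 * k)),
        ((i + 2 * k : ℕ) : ZMod (3 * k))} : Finset (ZMod (3 * k))))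
      ↑(Finset.range k) := by
    intro i hi i' hi' h
    simp only at h
    simp only [Finset.coe_range, Set.mem_Iio] at hi hi'
    have hmem : ((i' : ℕ) : ZMod (3*k)) ∈
        ({((i : ℕ) : ZMod (3 * k)), ((i + k : ℕ) : ZMod (3 * k)),
          ((i + 2 * k : ℕ) : ZMod (3 * k))} : Finset (ZMod (3 * k))) := by
      rw [h]; simp
    simp only [Finset.mem_insert, Finset.mem_singleton] at hmem
    rcases hmem with h1 | h1 | h1
    · exact (cinj17 hk2 (by omega) (by omega) h1).symm
    · have := cinj17 hk2 (a := i') (b := i + k) (by omega) (by omega) h1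
      omega
    · have := cinj17 hk2 (a := i') (b := i + 2*k) (by omega) (by omega) h1
      omega
  -- injectivity of the second map
  have hinj2 : Set.InjOn (fun p : ℕ × ℕ =>
      ({((p.1 : ℕ) : ZMod (3 * k)), ((p.1 + k : ℕ) : ZMod (3 * k)),
        ((p.1 + p.2 : ℕ) : ZMod (3 * k))} : Finset (ZMod (3 * k))))
      ↑((Finset.range (3 * k)) ×ˢ (Finset.Icc (k + 1) (2 * k - 1))) := by
    intro p hp q hq h
    simp only [Finset.coe_product, Set.mem_prod, Finset.mem_coe, Finset.mem_range,
      Finset.mem_Icc] at hp hq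
    obtain ⟨hi, hj1, hj2⟩ : p.1 < 3*k ∧ k+1 ≤ p.2 ∧ p.2 ≤ 2*k-1 := ⟨hp.1, hp.2.1, hp.2.2⟩
    obtain ⟨hi', hj1', hj2'⟩ : q.1 < 3*k ∧ k+1 ≤ q.2 ∧ q.2 ≤ 2*k-1 := ⟨hq.1, hq.2.1, hq.2.2⟩
    set i := p.1; set j := p.2; set i' := q.1; set j' := q.2
    simp only at h
    -- membership facts
    have hmem : ((i' : ℕ) : ZMod (3*k)) ∈
        ({((i : ℕ) : ZMod (3 * k)), ((i + k : ℕ) : ZMod (3 * k)),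
          ((i + j : ℕ) : ZMod (3 * k))} : Finset (ZMod (3 * k))) := by
      rw [h]; simp [i', j']
    have hmemk : ((i' + k : ℕ) : ZMod (3*k)) ∈
        ({((i : ℕ) : ZMod (3 * k)), ((i + k : ℕ) : ZMod (3 * k)),
          ((i + j : ℕ) : ZMod (3 * k))} : Finset (ZMod (3 * k))) := by
      rw [h]; simp [i', j']
    have hmemj : ((i' + j' : ℕ) : ZMod (3*k)) ∈
        ({((i : ℕ) : ZMod (3 * k)), ((i + k : ℕ) : ZMod (3 * k)),
          ((i + j : ℕ) : ZMod (3 * k))} : Finset (ZMod (3 * k))) := by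
      rw [h]; simp [i', j']
    simp only [Finset.mem_insert, Finset.mem_singleton] at hmem hmemk hmemj
    push_cast at hmem hmemk hmemj
    have hii : ((i' : ℕ) : ZMod (3*k)) = ((i : ℕ) : ZMod (3*k)) := by
      rcases hmem with h1 | h1 | h1
      · exact h1
      · -- i' = i + k : then i' + k = i + 2k must be in the set; contradiction
        exfalso
        rcases hmemk with h2 | h2 | h2
        · -- i + k + k = i, so 2k ≡ 0
          have : ((2*k : ℕ) : ZMod (3*k)) = ((0 : ℕ) : ZMod (3*k)) := by
            push_cast
            linear_combination h2 - h1
          have := cinj17 hk2 (by omega) (by omega) this; omega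
        · -- k ≡ 0
          have : ((k : ℕ) : ZMod (3*k)) = ((0 : ℕ) : ZMod (3*k)) := by
            push_cast
            linear_combination h2 - h1
          have := cinj17 hk2 (by omega) (by omega) this; omega
        · -- j ≡ 2k
          have : ((j : ℕ) : ZMod (3*k)) = ((2*k : ℕ) : ZMod (3*k)) := by
            push_cast
            linear_combination h1 - h2
          have := cinj17 hk2 (by omega) (by omega) this; omega
      · -- i' = i + j : then i' + k = i + j + k in the set; contradiction
        exfalso
        rcases hmemk with h2 | h2 | h2
        · -- j + k ≡ 0
          have : ((j + k : ℕ) : ZMod (3*k)) = ((0 : ℕ) : ZMod (3*k)) := by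
            push_cast
            linear_combination h2 - h1
          have := cinj17 hk2 (by omega) (by omega) this; omega
        · -- j ≡ 0
          have : ((j : ℕ) : ZMod (3*k)) = ((0 : ℕ) : ZMod (3*k)) := by
            push_cast
            linear_combination h2 - h1
          have := cinj17 hk2 (by omega) (by omega) this; omega
        · -- k ≡ 0
          have : ((k : ℕ) : ZMod (3*k)) = ((0 : ℕ) : ZMod (3*k)) := by
            push_cast
            linear_combination h2 - h1
          have := cinj17 hk2 (by omega) (by omega) this; omega
    have hieq : i' = i := cinj17 hk2 (by omega) (by omega) hii
    have hjeq : j' = j := by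
      push_cast at hii
      rcases hmemj with h1 | h1 | h1
      · -- j' ≡ 0
        exfalso
        have : ((j' : ℕ) : ZMod (3*k)) = ((0 : ℕ) : ZMod (3*k)) := by
          push_cast
          linear_combination h1 - hii
        have := cinj17 hk2 (by omega) (by omega) this; omega
      · -- j' ≡ k
        exfalso
        have : ((j' : ℕ) : ZMod (3*k)) = ((k : ℕ) : ZMod (3*k)) := by
          push_cast
          linear_combination h1 - hii
        have := cinj17 hk2 (by omega) (by omega) this; omega
      · have : ((j' : ℕ) : ZMod (3*k)) = ((j : ℕ) : ZMod (3*k)) := by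
          push_cast
          linear_combination h1 - hii
        exact cinj17 hk2 (by omega) (by omega) this
    exact Prod.ext hieq.symm hjeq.symm
  -- disjointness
  have hdisj : Disjoint
      (((Finset.range k).image (fun i =>
        ({((i : ℕ) : ZMod (3 * k)), ((i + k : ℕ) : ZMod (3 * k)),
          ((i + 2 * k : ℕ) : ZMod (3 * k))} : Finset (ZMod (3 * k))))))
      ((((Finset.range (3 * k)) ×ˢ (Finset.Icc (k + 1) (2 * k - 1))).image
          (fun p =>
            ({((p.1 : ℕ) : ZMod (3 * k)), ((p.1 + k : ℕ) : ZMod (3 * k)),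
              ((p.1 + p.2 : ℕ) : ZMod (3 * k))} : Finset (ZMod (3 * k)))))) := by
    rw [Finset.disjoint_left]
    rintro S hS1 hS2
    simp only [Finset.mem_image, Finset.mem_range, Finset.mem_product, Finset.mem_Icc,
      Prod.exists] at hS1 hS2
    obtain ⟨i, hi, rfl⟩ := hS1
    obtain ⟨a, j, ⟨ha, hj1, hj2⟩, heq⟩ := hS2
    have hmem : ((a : ℕ) : ZMod (3*k)) ∈
        ({((i : ℕ) : ZMod (3 * k)), ((i + k : ℕ) : ZMod (3 * k)),
          ((i + 2 * k : ℕ) : ZMod (3 * k))} : Finset (ZMod (3 * k))) := by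
      rw [← heq]; simp
    have hmemj : ((a + j : ℕ) : ZMod (3*k)) ∈
        ({((i : ℕ) : ZMod (3 * k)), ((i + k : ℕ) : ZMod (3 * k)),
          ((i + 2 * k : ℕ) : ZMod (3 * k))} : Finset (ZMod (3 * k))) := by
      rw [← heq]; simp
    simp only [Finset.mem_insert, Finset.mem_singleton] at hmem hmemj
    push_cast at hmem hmemj
    rcases hmem with h1 | h1 | h1
    · rcases hmemj with h2 | h2 | h2
      · have : ((j : ℕ) : ZMod (3*k)) = ((0 : ℕ) : ZMod (3*k)) := by
          push_cast; linear_combination h2 - h1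
        have := cinj17 hk2 (by omega) (by omega) this; omega
      · have : ((j : ℕ) : ZMod (3*k)) = ((k : ℕ) : ZMod (3*k)) := by
          push_cast; linear_combination h2 - h1
        have := cinj17 hk2 (by omega) (by omega) this; omega
      · have : ((j : ℕ) : ZMod (3*k)) = ((2*k : ℕ) : ZMod (3*k)) := by
          push_cast; linear_combination h2 - h1
        have := cinj17 hk2 (by omega) (by omega) this; omega
    · rcases hmemj with h2 | h2 | h2
      · have : ((k + j : ℕ) : ZMod (3*k)) = ((0 : ℕ) : ZMod (3*k)) := by
          push_cast; linear_combination h2 - h1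
        have := cinj17 hk2 (by omega) (by omega) this; omega
      · have : ((j : ℕ) : ZMod (3*k)) = ((0 : ℕ) : ZMod (3*k)) := by
          push_cast; linear_combination h2 - h1
        have := cinj17 hk2 (by omega) (by omega) this; omega
      · have : ((j : ℕ) : ZMod (3*k)) = ((k : ℕ) : ZMod (3*k)) := by
          push_cast; linear_combination h2 - h1
        have := cinj17 hk2 (by omega) (by omega) this; omega
    · rcases hmemj with h2 | h2 | h2
      · -- 2k + j ≡ 0, i.e. j - k ≡ 0 using 3k ≡ 0
        have : ((j - k : ℕ) : ZMod (3*k)) = ((0 : ℕ) : ZMod (3*k)) := by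
          rw [Nat.cast_sub (by omega : k ≤ j)]
          push_cast
          linear_combination h2 - h1 - h3
        have := cinj17 hk2 (by omega) (by omega) this; omega
      · have : ((k + j : ℕ) : ZMod (3*k)) = ((0 : ℕ) : ZMod (3*k)) := by
          push_cast; linear_combination h2 - h1
        have := cinj17 hk2 (by omega) (by omega) this; omega
      · have : ((j : ℕ) : ZMod (3*k)) = ((0 : ℕ) : ZMod (3*k)) := by
          push_cast; linear_combination h2 - h1
        have := cinj17 hk2 (by omega) (by omega) this; omega
  rw [Finset.card_union_of_disjoint hdisj, Finset.card_image_of_injOn hinj1,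
    Finset.card_image_of_injOn hinj2, Finset.card_range, Finset.card_product,
    Finset.card_range, Nat.card_Icc]
  have h1 : 2 * k - 1 + 1 - (k + 1) = k - 1 := by omega
  rw [h1]
  obtain ⟨m, rfl⟩ : ∃ m, k = m + 2 := ⟨k - 2, by omega⟩
  have h2 : (m + 2) - 1 = m + 1 := by omega
  have h4 : 3 * (m + 2) - 2 = 3 * m + 4 := by omega
  rw [h2, h4]
  ring
end
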